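/- Let A and B be positive invertible operators with m·I ≤ A, B ≤ M·I for 0 < m ≤ M and set h = M/m. Then for every v ∈ [0,1], (1−v)A + vB ≤ S(h) · (A #_v B), where S(h) = (h−1)h^{1/(h−1)}/(e log h) is the Specht ratio (S(1) = 1). -/

import Mathlib

set_option synthInstance.maxHeartbeats 1000000
set_option maxHeartbeats 1000000

open scoped NNReal

/-- The `t`-weighted geometric mean `A #_t B = A^{1/2} (A^{-1/2} B A^{-1/2})^t A^{1/2}`,
defined via the continuous functional calculus real power. -/
noncomputable def geomMean {H : Type*} [NormedAddCommGroup H] [InnerProductSpace ℂ H]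
    [CompleteSpace H] (A B : H →L[ℂ] H) (t : ℝ) : H →L[ℂ] H :=
  A ^ ((1 : ℝ) / 2) * (A ^ (-(1 : ℝ) / 2) * B * A ^ (-(1 : ℝ) / 2)) ^ t * A ^ ((1 : ℝ) / 2)

/-- The Specht ratio `S(h) = (h-1) h^{1/(h-1)} / (e log h)` for `h ≠ 1`, with `S(1) = 1`. -/
noncomputable def specht (h : ℝ) : ℝ :=
  if h = 1 then 1 else (h - 1) * h ^ (1 / (h - 1)) / (Real.exp 1 * Real.log h)

private lemma exp_ge_e_mul (y : ℝ) : Real.exp 1 * y ≤ Real.exp y := by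
  calc Real.exp 1 * y ≤ Real.exp 1 * Real.exp (y - 1) := by
        apply mul_le_mul_of_nonneg_left _ (Real.exp_pos 1).le
        linarith [Real.add_one_le_exp (y - 1)]
    _ = Real.exp y := by rw [← Real.exp_add]; ring_nf

private lemma specht_key {h : ℝ} (h1 : 1 < h) (w : ℝ) :
    1 - w + w * h ≤ specht h * h ^ w := by
  have h0 : (0:ℝ) < h := one_pos.trans h1
  have hL : 0 < Real.log h := Real.log_pos h1
  have hh1 : (0:ℝ) < h - 1 := by linarith
  rw [specht, if_neg (ne_of_gt h1)]
  rw [Real.rpow_def_of_pos h0, Real.rpow_def_of_pos h0]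
  set L := Real.log h with hLdef
  have key := exp_ge_e_mul ((1/(h-1) + w) * L)
  have e1 : (h - 1) * Real.exp (L * (1/(h-1))) / (Real.exp 1 * L) * Real.exp (L * w)
      = ((h-1)/(Real.exp 1 * L)) * Real.exp ((1/(h-1)+w) * L) := by
    rw [show (1/(h-1)+w) * L = L * (1/(h-1)) + L * w by ring, Real.exp_add]; ring
  rw [e1]
  have e2 : ((h-1)/(Real.exp 1 * L)) * (Real.exp 1 * ((1/(h-1)+w) * L)) = 1 - w + w * h := by
    field_simp
    ring
  calc 1 - w + w * h = ((h-1)/(Real.exp 1 * L)) * (Real.exp 1 * ((1/(h-1)+w) * L)) := e2.symm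
    _ ≤ _ := mul_le_mul_of_nonneg_left key (by positivity)

private lemma specht_nonneg {h : ℝ} (h1 : 1 < h) : 0 ≤ specht h := by
  have := specht_key h1 0
  simp [Real.rpow_zero] at this
  linarith

private lemma scalar_main {h : ℝ} (h1 : 1 ≤ h) {v : ℝ} (hv0 : 0 ≤ v) (hv1 : v ≤ 1)
    {t : ℝ} (ht1 : 1/h ≤ t) (ht2 : t ≤ h) : 1 - v + v * t ≤ specht h * t ^ v := by
  rcases eq_or_lt_of_le h1 with rfl | h1'
  · have ht : t = 1 := le_antisymm ht2 (by simpa using ht1)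
    subst ht
    simp [specht]
  · have h0 : (0:ℝ) < h := by linarith
    have hS : 0 ≤ specht h := specht_nonneg h1'
    have endA : 1 - v + v * h ≤ specht h * h ^ v := specht_key h1' v
    have endB : 1 - v + v * (1/h) ≤ specht h * (1/h) ^ v := by
      have key := specht_key h1' (1 - v)
      have hrw : (1/h : ℝ) ^ v = h ^ (1 - v) / h := by
        rw [one_div, Real.inv_rpow h0.le, ← Real.rpow_neg h0.le, eq_div_iff h0.ne',
          ← Real.rpow_add_one h0.ne']
        congr 1
        ring
      rw [hrw, show specht h * (h ^ ((1:ℝ) - v) / h) = specht h * h ^ ((1:ℝ)-v) / h from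
        (mul_div_assoc _ _ _).symm, le_div_iff₀ h0]
      calc (1 - v + v * (1/h)) * h = 1 - (1 - v) + (1 - v) * h := by field_simp; ring
        _ ≤ specht h * h ^ (1 - v) := key
    have h1h : (1/h : ℝ) ≤ h := le_trans ht1 ht2
    obtain ⟨a, b, ha, hb, hab, habt⟩ := (Convex.mem_Icc h1h).mp ⟨ht1, ht2⟩
    have hconc := ConcaveOn.smul hS (Real.concaveOn_rpow hv0 hv1)
    have h2 := hconc.2 (Set.mem_Ici.mpr (by positivity : (0:ℝ) ≤ 1/h))
      (Set.mem_Ici.mpr h0.le) ha hb hab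
    simp only [smul_eq_mul] at h2
    rw [habt] at h2
    have hcomb : 1 - v + v * t = a * (1 - v + v * (1/h)) + b * (1 - v + v * h) := by
      rw [← habt]; linear_combination (1 - v) * hab.symm
    calc 1 - v + v * t = a * (1 - v + v * (1/h)) + b * (1 - v + v * h) := hcomb
      _ ≤ a * (specht h * (1/h) ^ v) + b * (specht h * h ^ v) :=
          add_le_add (mul_le_mul_of_nonneg_left endB ha) (mul_le_mul_of_nonneg_left endA hb)
      _ ≤ specht h * t ^ v := h2

/-- For positive invertible operators `A, B` with `m • 1 ≤ A, B ≤ M • 1`, `0 < m ≤ M`,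
`h = M/m`, and every `v ∈ [0,1]`, one has `(1-v)A + vB ≤ S(h) • (A #ᵥ B)`. -/
theorem specht_reverse_amgm
    {H : Type*} [NormedAddCommGroup H] [InnerProductSpace ℂ H] [CompleteSpace H]
    (A B : H →L[ℂ] H) (hA : 0 ≤ A) (hB : 0 ≤ B)
    (hAinv : Invertible A) (hBinv : Invertible B)
    (m M : ℝ) (hm : 0 < m) (hmM : m ≤ M)
    (hA1 : m • (1 : H →L[ℂ] H) ≤ A) (hA2 : A ≤ M • (1 : H →L[ℂ] H))
    (hB1 : m • (1 : H →L[ℂ] H) ≤ B) (hB2 : B ≤ M • (1 : H →L[ℂ] H))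
    (v : ℝ) (hv0 : 0 ≤ v) (hv1 : v ≤ 1) :
    (1 - v) • A + v • B ≤ specht (M / m) • geomMean A B v := by
  have hM0 : (0:ℝ) < M := lt_of_lt_of_le hm hmM
  have hAs : 0 ∉ spectrum ℝ≥0 A := spectrum.zero_notMem ℝ≥0 (isUnit_of_invertible A)
  set Y := A ^ ((1:ℝ)/2) with hYdef
  set X := A ^ (-(1:ℝ)/2) with hXdef
  have hXnn : (0:H →L[ℂ] H) ≤ X := CFC.rpow_nonneg
  have hYnn : (0:H →L[ℂ] H) ≤ Y := CFC.rpow_nonneg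
  have hXsa : IsSelfAdjoint X := .of_nonneg hXnn
  have hYsa : IsSelfAdjoint Y := .of_nonneg hYnn
  have hXY : X * Y = 1 := by
    rw [hXdef, hYdef, ← CFC.rpow_add (isUnit_of_invertible A)]
    norm_num
    exact CFC.rpow_zero A
  have hYX : Y * X = 1 := by
    rw [hXdef, hYdef, ← CFC.rpow_add (isUnit_of_invertible A)]
    norm_num
    exact CFC.rpow_zero A
  have hYY : Y * Y = A := by
    rw [hYdef, ← CFC.rpow_add (isUnit_of_invertible A)]
    norm_num
    exact CFC.rpow_one A
  have hXAX : X * A * X = 1 := by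
    calc X * A * X = (X * Y) * (Y * X) := by rw [← hYY]; simp only [mul_assoc]
      _ = 1 := by rw [hXY, hYX, one_mul]
  set C := X * B * X with hCdef
  have hCnn : (0:H →L[ℂ] H) ≤ C := conjugate_nonneg_of_nonneg hB hXnn
  have hCsa : IsSelfAdjoint C := .of_nonneg hCnn
  have hXXub : X * X ≤ m⁻¹ • 1 := by
    have h1 := hXsa.conjugate_le_conjugate hA1
    rw [hXAX] at h1
    have e : X * (m • (1:H →L[ℂ] H)) * X = m • (X * X) := by
      simp [smul_mul_assoc, mul_smul_comm]
    rw [e] at h1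
    calc X * X = m⁻¹ • (m • (X * X)) := by rw [smul_smul]; field_simp; rw [one_smul]
      _ ≤ m⁻¹ • (1:H →L[ℂ] H) := smul_le_smul_of_nonneg_left h1 (by positivity)
  have hXXlb : M⁻¹ • 1 ≤ X * X := by
    have h1 := hXsa.conjugate_le_conjugate hA2
    rw [hXAX] at h1
    have e : X * (M • (1:H →L[ℂ] H)) * X = M • (X * X) := by
      simp [smul_mul_assoc, mul_smul_comm]
    rw [e] at h1
    calc M⁻¹ • (1:H →L[ℂ] H) ≤ M⁻¹ • (M • (X * X)) :=
          smul_le_smul_of_nonneg_left h1 (by positivity)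
      _ = X * X := by rw [smul_smul]; field_simp; rw [one_smul]
  have hCub : C ≤ (M/m) • 1 := by
    calc C ≤ X * (M • 1) * X := hXsa.conjugate_le_conjugate hB2
      _ = M • (X * X) := by simp [smul_mul_assoc, mul_smul_comm]
      _ ≤ M • (m⁻¹ • (1:H →L[ℂ] H)) := smul_le_smul_of_nonneg_left hXXub hM0.le
      _ = (M/m) • 1 := by rw [smul_smul, div_eq_mul_inv]
  have hClb : (m/M) • 1 ≤ C := by
    calc (m/M) • (1:H →L[ℂ] H) = m • (M⁻¹ • (1:H →L[ℂ] H)) := by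
          rw [smul_smul, div_eq_mul_inv]
      _ ≤ m • (X * X) := smul_le_smul_of_nonneg_left hXXlb hm.le
      _ = X * (m • 1) * X := by simp [smul_mul_assoc, mul_smul_comm]
      _ ≤ X * B * X := hXsa.conjugate_le_conjugate hB1
  have hspec : ∀ x ∈ spectrum ℝ C, m/M ≤ x ∧ x ≤ M/m := by
    intro x hx
    constructor
    · exact (algebraMap_le_iff_le_spectrum hCsa).mp
        (by rwa [Algebra.algebraMap_eq_smul_one]) x hx
    · exact (le_algebraMap_iff_spectrum_le hCsa).mp
        (by rwa [Algebra.algebraMap_eq_smul_one]) x hx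
  have hh1 : (1:ℝ) ≤ M/m := (one_le_div hm).mpr hmM
  have hgcont : Continuous (fun x : ℝ => ((x.toNNReal ^ v : ℝ≥0) : ℝ)) := by
    exact NNReal.continuous_coe.comp
      ((NNReal.continuous_rpow_const hv0).comp continuous_real_toNNReal)
  have hrpow : C ^ v = cfc (fun x : ℝ => ((x.toNNReal ^ v : ℝ≥0) : ℝ)) C := by
    rw [CFC.rpow_def, cfc_nnreal_eq_real _ _ hCnn]
  have hlhs : (1-v) • (1:H →L[ℂ] H) + v • C = cfc (fun x : ℝ => (1-v) + v * x) C := by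
    rw [show (fun x : ℝ => (1-v) + v * x) =
      (fun x : ℝ => (fun _ : ℝ => (1-v)) x + (fun y : ℝ => v * y) x) from rfl]
    rw [cfc_add (a := C) _ _, cfc_const _ _ hCsa, cfc_const_mul_id v C hCsa,
      Algebra.algebraMap_eq_smul_one]
  have hrhs : specht (M/m) • C ^ v
      = cfc (fun x : ℝ => specht (M/m) * ((x.toNNReal ^ v : ℝ≥0) : ℝ)) C := by
    rw [hrpow, ← cfc_const_mul _ _ _ hgcont.continuousOn]
  have hmain : (1-v) • (1:H →L[ℂ] H) + v • C ≤ specht (M/m) • C ^ v := by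
    rw [hlhs, hrhs]
    apply cfc_mono ?_ (by fun_prop) ((continuous_const.mul hgcont).continuousOn)
    intro x hx
    obtain ⟨hx1, hx2⟩ := hspec x hx
    have hx0 : (0:ℝ) < x := lt_of_lt_of_le (by positivity) hx1
    have hcoe : ((x.toNNReal ^ v : ℝ≥0) : ℝ) = x ^ v := by
      rw [NNReal.coe_rpow, Real.coe_toNNReal x hx0.le]
    simp only [Pi.mul_apply]
    rw [hcoe]
    exact scalar_main hh1 hv0 hv1 (by rw [one_div_div]; exact hx1) hx2
  have hfin := hYsa.conjugate_le_conjugate hmain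
  have hYCY : Y * C * Y = B := by
    calc Y * (X * B * X) * Y = (Y * X) * (B * (X * Y)) := by simp only [mul_assoc]
      _ = B := by rw [hYX, hXY, mul_one, one_mul]
  calc (1 - v) • A + v • B = Y * ((1-v) • (1:H →L[ℂ] H) + v • C) * Y := by
        rw [mul_add, add_mul]
        congr 1
        · simp [smul_mul_assoc, mul_smul_comm, hYY]
        · simp only [smul_mul_assoc, mul_smul_comm, hYCY]
    _ ≤ Y * (specht (M/m) • C ^ v) * Y := hfin
    _ = specht (M/m) • geomMean A B v := by
        rw [geomMean, ← hXdef, ← hYdef, ← hCdef]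
        simp only [smul_mul_assoc, mul_smul_comm]
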